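/- Let n ≥ 2 and let d = (d_1, …, d_n) be integers with 2 ≤ d_1 ≤ ⋯ ≤ d_n and d_n − 1 > ∑_{i=1}^{n−1}(d_i − 1). Then there exists an n-player game X of format d over ℂ whose Nash equilibrium set is empty. -/
import Mathlib


/-- Insert the value `s` at position `i` into an index tuple defined on all positions `≠ i`,
producing a full multi-index in `∏ k, Fin (d k)`. -/
def insertAt {n : ℕ} (d : Fin n → ℕ) (i : Fin n) (s : Fin (d i))
    (j : ∀ m : {m : Fin n // m ≠ i}, Fin (d m.1)) : ∀ k, Fin (d k) :=
  fun k => if h : k = i then Fin.cast (congrArg d h.symm) s else j ⟨k, h⟩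

/-- The contraction `X⁽ⁱ⁾(π₋ᵢ) ∈ K^{dᵢ}`: its `s`-th entry is
`∑_{j₋ᵢ} X_{(s, j₋ᵢ)} ∏_{l ≠ i} π⁽ˡ⁾_{j_l}`. -/
noncomputable def contraction {n : ℕ} (d : Fin n → ℕ) {K : Type*} [CommRing K] (i : Fin n)
    (X : (∀ k, Fin (d k)) → K)
    (π : ∀ m : {m : Fin n // m ≠ i}, Fin (d m.1) → K) (s : Fin (d i)) : K :=
  ∑ j : ∀ m : {m : Fin n // m ≠ i}, Fin (d m.1),
    X (insertAt d i s j) * ∏ m : {m : Fin n // m ≠ i}, π m (j m)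

set_option maxHeartbeats 1000000 in
/-- if `2 ≤ d₁ ≤ ⋯ ≤ dₙ` and `dₙ - 1 > ∑_{i=1}^{n-1}(dᵢ - 1)`, then there
exists an `n`-player game of format `d` over `ℂ` whose Nash equilibrium set is empty. -/
theorem exists_game_with_empty_nash_set (n : ℕ) (hn : 2 ≤ n) (d : Fin n → ℕ)
    (hd : ∀ i, 2 ≤ d i) (hmono : Monotone d)
    (hfmt : ∑ i ∈ Finset.univ.erase (⟨n - 1, by omega⟩ : Fin n), (d i - 1) <
      d ⟨n - 1, by omega⟩ - 1) :
    ∃ X : ∀ i : Fin n, (∀ k, Fin (d k)) → ℂ,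
      ∀ π : ∀ k, Fin (d k) → ℂ, (∀ k, π k ≠ 0) →
        ¬ (∀ i : Fin n, ∀ s t : Fin (d i),
            contraction d i (X i) (fun m => π m.1) s =
              contraction d i (X i) (fun m => π m.1) t) := by
  set p : Fin n := ⟨n - 1, by omega⟩ with hp
  refine ⟨fun _ j => if (∑ m : {m : Fin n // m ≠ p}, ((j m.1 : ℕ))) = ((j p : ℕ))
    then 1 else 0, ?_⟩
  intro π hπ h
  -- the polynomials with coefficient vectors π^(m), m ≠ p
  set P : {m : Fin n // m ≠ p} → Polynomial ℂ :=
    fun m => ∑ j : Fin (d m.1), Polynomial.C (π m.1 j) * Polynomial.X ^ (j : ℕ) with hPdef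
  have hcoeffP : ∀ m : {m : Fin n // m ≠ p}, ∀ j : Fin (d m.1),
      (P m).coeff (j : ℕ) = π m.1 j := by
    intro m j
    rw [hPdef]
    rw [Polynomial.finset_sum_coeff]
    rw [Finset.sum_eq_single j]
    · simp [Polynomial.coeff_X_pow]
    · intro b _ hb
      have : (j : ℕ) ≠ (b : ℕ) := fun hh => hb (Fin.ext hh.symm)
      simp [Polynomial.coeff_X_pow, this]
    · simp
  have hPne : ∀ m, P m ≠ 0 := by
    intro m hm0
    apply hπ m.1
    funext j
    have := hcoeffP m j
    rw [hm0] at this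
    simpa using this.symm
  set Q : Polynomial ℂ := ∏ m : {m : Fin n // m ≠ p}, P m with hQdef
  have hQne : Q ≠ 0 := Finset.prod_ne_zero_iff.mpr (fun m _ => hPne m)
  have hdegP : ∀ m : {m : Fin n // m ≠ p}, (P m).natDegree ≤ d m.1 - 1 := by
    intro m
    rw [hPdef]
    refine Polynomial.natDegree_sum_le_of_forall_le _ _ (fun j _ => ?_)
    refine le_trans (Polynomial.natDegree_C_mul_le _ _) ?_
    rw [Polynomial.natDegree_X_pow]
    have := j.2
    omega
  have hdegQ : Q.natDegree < d p - 1 := by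
    refine lt_of_le_of_lt (Polynomial.natDegree_prod_le _ _) ?_
    refine lt_of_le_of_lt (Finset.sum_le_sum (fun m _ => hdegP m)) ?_
    calc ∑ m : {m : Fin n // m ≠ p}, (d m.1 - 1)
        = ∑ m ∈ Finset.univ.erase p, (d m - 1) := by
          exact (Finset.sum_subtype (Finset.univ.erase p)
            (by intro x; simp) (fun m => d m - 1)).symm
      _ < d p - 1 := hfmt
  -- key: the contraction of the last player computes coefficients of Q
  have key : ∀ s : Fin (d p),
      contraction d p (fun j => if (∑ m : {m : Fin n // m ≠ p}, ((j m.1 : ℕ))) = ((j p : ℕ))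
        then (1:ℂ) else 0) (fun m => π m.1) s = Q.coeff (s : ℕ) := by
    intro s
    have hQexp : Q = ∑ j : ∀ m : {m : Fin n // m ≠ p}, Fin (d m.1),
        Polynomial.C (∏ m : {m : Fin n // m ≠ p}, π m.1 (j m)) *
          Polynomial.X ^ (∑ m : {m : Fin n // m ≠ p}, ((j m : ℕ))) := by
      rw [hQdef, hPdef, Fintype.prod_sum]
      refine Finset.sum_congr rfl (fun j _ => ?_)
      rw [Finset.prod_mul_distrib, map_prod, Finset.prod_pow_eq_pow_sum]
    rw [hQexp, Polynomial.finset_sum_coeff]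
    unfold contraction
    refine Finset.sum_congr rfl (fun j _ => ?_)
    have h1 : ((insertAt d p s j) p : ℕ) = (s : ℕ) := by
      simp [insertAt]
    have h2 : ∀ m : {m : Fin n // m ≠ p}, insertAt d p s j m.1 = j m := by
      intro m
      simp [insertAt, m.2]
    have h3 : (∑ m : {m : Fin n // m ≠ p}, ((insertAt d p s j m.1 : ℕ)))
        = ∑ m : {m : Fin n // m ≠ p}, ((j m : ℕ)) := by
      exact Finset.sum_congr rfl (fun m _ => by rw [h2 m])
    simp only [Polynomial.coeff_C_mul, Polynomial.coeff_X_pow, h1, h3]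
    by_cases hc : (∑ m : {m : Fin n // m ≠ p}, ((j m : ℕ))) = (s : ℕ)
    · simp [hc]
    · simp [hc, Ne.symm hc]
  -- find a nonzero coefficient of Q
  obtain ⟨k, hk⟩ : ∃ k, Q.coeff k ≠ 0 := by
    by_contra hall
    push_neg at hall
    exact hQne (Polynomial.ext (fun k => by simp [hall k]))
  have hkle : k ≤ Q.natDegree := Polynomial.le_natDegree_of_ne_zero hk
  have hdp : 2 ≤ d p := hd p
  have hklt : k < d p := by omega
  have htop : Q.coeff (d p - 1) = 0 :=
    Polynomial.coeff_eq_zero_of_natDegree_lt (by omega)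
  have := h p ⟨k, hklt⟩ ⟨d p - 1, by omega⟩
  rw [key ⟨k, hklt⟩, key ⟨d p - 1, by omega⟩] at this
  simp only at this
  rw [htop] at this
  exact hk this
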